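/- arXiv:1604.00761 — 3 statements merged into one kernel-verified Lean document; each statement's English description precedes it below -/
import Mathlib

section
/- Let C be a binary [n,k,d] linear code with 1 ≤ a ≤ d-1 and b ≥ 0. If 2^{-(n-k)} · Σ_{u=1}^{a} C(n,u) · Σ_{i=0}^{b} i·C(n-k, b-i) + 2^{-(n-k)^2} · Σ_{r=0}^{n-k} (n-k-r) · [n-k choose r]_2 · Π_{i=0}^{r-1} (2^{n-k} - 2^i) < 1, then there exists an (n-k) × n parity-check matrix for C containing no (u,v)-trapping set for any 1 ≤ u ≤ a and 0 ≤ v ≤ b-1; hence the collective (a,b)-trapping redundancy of C equals n-k. -/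
open Finset

/-- The Gaussian binomial coefficient with base 2, as a real number:
`[x choose y]_2 = ∏_{i=0}^{y-1} (2^{x-i} - 1)/(2^{i+1} - 1)`. -/
noncomputable def gaussBinom2 (x y : ℕ) : ℝ :=
  ∏ i ∈ Finset.range y, ((2 : ℝ) ^ (x - i) - 1) / ((2 : ℝ) ^ (i + 1) - 1)

/-- The dual code of a binary linear code `C ⊆ F_2^n`. -/
def dualCode {n : ℕ} (C : Submodule (ZMod 2) (Fin n → ZMod 2)) :
    Set (Fin n → ZMod 2) :=
  {v | ∀ c ∈ C, ∑ j, v j * c j = 0}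

/-- `H` (given by its rows) is a parity-check matrix for `C`:
its right kernel is exactly `C`. -/
def IsParityCheck {n : ℕ} {ι : Type*} (H : ι → Fin n → ZMod 2)
    (C : Submodule (ZMod 2) (Fin n → ZMod 2)) : Prop :=
  ∀ x : Fin n → ZMod 2, (∀ i, ∑ j, H i j * x j = 0) ↔ x ∈ C

/-- `H` contains an `(a,b)`-trapping set: `a` distinct columns such that exactly `b`
rows of the corresponding submatrix have odd Hamming weight. -/
def HasTrappingSet {n : ℕ} {ι : Type*} (H : ι → Fin n → ZMod 2) (a b : ℕ) : Prop :=
  ∃ S : Finset (Fin n), S.card = a ∧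
    Set.ncard {i : ι | ∑ j ∈ S, H i j = 1} = b

/-- The collective `(a,b)`-trapping redundancy of `C`: the least number of rows of a
parity-check matrix for `C` containing no `(s,t)`-trapping set for `1 ≤ s ≤ a`,
`0 ≤ t ≤ b-1`. -/
noncomputable def collectiveTrappingRedundancy {n : ℕ}
    (C : Submodule (ZMod 2) (Fin n → ZMod 2)) (a b : ℕ) : ℕ :=
  sInf {m | ∃ H : Fin m → Fin n → ZMod 2, IsParityCheck H C ∧
    ∀ s t : ℕ, 1 ≤ s → s ≤ a → t < b → ¬ HasTrappingSet H s t}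

/-- The probabilistic upper bound expression of Theorem 1, as a real number. -/
noncomputable def trappingBound (n k a b t : ℕ) : ℝ :=
  (∑ u ∈ Finset.Icc 1 a, (n.choose u : ℝ) *
      ∑ i ∈ Finset.range (b + 1), (i : ℝ) * (t.choose (b - i) : ℝ)) / 2 ^ t
    + (∑ r ∈ Finset.range (n - k + 1), ((n - k - r : ℕ) : ℝ) * gaussBinom2 (n - k) r *
        ∏ i ∈ Finset.range r, ((2 : ℝ) ^ t - 2 ^ i)) / 2 ^ (t * (n - k))


lemma zmod2_cases (x : ZMod 2) : x = 0 ∨ x = 1 := by revert x; decide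

def indVec {n : ℕ} (S : Finset (Fin n)) : Fin n → ZMod 2 := fun j => if j ∈ S then 1 else 0

lemma hammingNorm_eq_card_filter_one {m : ℕ} (w : Fin m → ZMod 2) :
    hammingNorm w = (univ.filter (fun j => w j = 1)).card := by
  unfold hammingNorm
  congr 1
  apply Finset.filter_congr
  intro j _
  rcases zmod2_cases (w j) with h | h <;> simp [h]

lemma hammingNorm_indVec {n : ℕ} (S : Finset (Fin n)) : hammingNorm (indVec S) = S.card := by
  rw [hammingNorm_eq_card_filter_one]
  congr 1
  ext j
  simp [indVec]

lemma card_filter_card_mem {α : Type*} [Fintype α] [DecidableEq α] (t : Finset ℕ) :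
    ((univ : Finset (Finset α)).filter (fun S => S.card ∈ t)).card
      = ∑ v ∈ t, (Fintype.card α).choose v := by
  rw [Finset.card_eq_sum_card_fiberwise (f := Finset.card) (t := t)
    (s := (univ : Finset (Finset α)).filter (fun S => S.card ∈ t))
    (fun S hS => Finset.mem_coe.mpr (Finset.mem_filter.mp (Finset.mem_coe.mp hS)).2)]
  refine Finset.sum_congr rfl fun v hv => ?_
  rw [Finset.filter_filter]
  have : ((univ : Finset (Finset α)).filter fun S => S.card ∈ t ∧ S.card = v)
      = (univ : Finset (Finset α)).filter (fun S => S.card = v) := by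
    apply Finset.filter_congr
    intro S _
    exact ⟨fun ⟨_, h⟩ => h, fun h => ⟨h ▸ hv, h⟩⟩
  rw [this, ← Finset.powerset_univ, ← Finset.powersetCard_eq_filter,
    Finset.card_powersetCard, Finset.card_univ]

lemma card_vec_small_weight {m b : ℕ} :
    ((univ : Finset (Fin m → ZMod 2)).filter
        (fun w => w ≠ 0 ∧ hammingNorm w < b)).card
      = ∑ v ∈ Finset.Ico 1 b, m.choose v := by
  have key : ((univ : Finset (Fin m → ZMod 2)).filter
        (fun w => w ≠ 0 ∧ hammingNorm w < b)).card
      = ((univ : Finset (Finset (Fin m))).filter (fun S => S.card ∈ Finset.Ico 1 b)).card := by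
    apply Finset.card_bij' (fun w _ => univ.filter (fun j => w j = 1))
      (fun S _ => indVec S)
    · intro w hw
      rw [Finset.mem_filter] at hw ⊢
      obtain ⟨-, hw0, hwb⟩ := hw
      refine ⟨Finset.mem_univ _, ?_⟩
      rw [← hammingNorm_eq_card_filter_one, Finset.mem_Ico]
      exact ⟨Nat.one_le_iff_ne_zero.mpr (hammingNorm_ne_zero_iff.mpr hw0), hwb⟩
    · intro S hS
      rw [Finset.mem_filter, Finset.mem_Ico] at hS
      obtain ⟨-, h1, hb⟩ := hS
      rw [Finset.mem_filter]
      refine ⟨Finset.mem_univ _, ?_, ?_⟩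
      · intro h
        obtain ⟨j, hj⟩ := Finset.card_pos.mp h1
        have := congrFun h j
        simp [indVec, hj] at this
      · rwa [hammingNorm_indVec]
    · intro w _
      funext j
      rcases zmod2_cases (w j) with h | h <;> simp [indVec, h]
    · intro S _
      ext j
      simp [indVec]
  rw [key, card_filter_card_mem]
  refine Finset.sum_congr rfl fun v _ => ?_
  rw [Fintype.card_fin]
lemma exists_sum_one {m : ℕ} {w w' : Fin m → ZMod 2} (hw : w ≠ 0) (hw' : w' ≠ 0) :
    ∃ J : Finset (Fin m), ∑ j ∈ J, w j = 1 ∧ ∑ j ∈ J, w' j = 1 := by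
  obtain ⟨j₁, hj₁⟩ := Function.ne_iff.mp hw
  obtain ⟨j₂, hj₂⟩ := Function.ne_iff.mp hw'
  have h1 : w j₁ = 1 := (zmod2_cases (w j₁)).resolve_left hj₁
  have h2 : w' j₂ = 1 := (zmod2_cases (w' j₂)).resolve_left hj₂
  by_cases hc : w' j₁ = 1
  · exact ⟨{j₁}, by simp [h1], by simp [hc]⟩
  by_cases hc' : w j₂ = 1
  · exact ⟨{j₂}, by simp [hc'], by simp [h2]⟩
  have hz1 : w' j₁ = 0 := (zmod2_cases (w' j₁)).resolve_right hc
  have hz2 : w j₂ = 0 := (zmod2_cases (w j₂)).resolve_right hc'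
  have hne : j₁ ≠ j₂ := by intro h; rw [h, hz2] at h1; exact one_ne_zero h1.symm
  refine ⟨{j₁, j₂}, ?_, ?_⟩
  · rw [Finset.sum_pair hne, h1, hz2, add_zero]
  · rw [Finset.sum_pair hne, hz1, h2, zero_add]

lemma exists_involution_mulVec {m : ℕ} {w w' : Fin m → ZMod 2} (hw : w ≠ 0) (hw' : w' ≠ 0) :
    ∃ g : Matrix (Fin m) (Fin m) (ZMod 2), g * g = 1 ∧ g.mulVec w = w' := by
  obtain ⟨J, hJ, hJ'⟩ := exists_sum_one hw hw'
  set u : Fin m → ZMod 2 := w + w' with hu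
  set M : Matrix (Fin m) (Fin m) (ZMod 2) :=
    Matrix.of (fun i j => u i * (if j ∈ J then 1 else 0)) with hM
  have hsum : ∑ l ∈ J, u l = 0 := by
    simp only [hu, Pi.add_apply, Finset.sum_add_distrib, hJ, hJ']
    decide
  have hMM : M * M = 0 := by
    ext i k
    rw [Matrix.mul_apply]
    have step : ∀ l, M i l * M l k
        = (u i * (if k ∈ J then 1 else 0)) * (if l ∈ J then u l else 0) := by
      intro l
      simp only [hM, Matrix.of_apply]
      split <;> split <;> ring
    rw [Finset.sum_congr rfl (fun l _ => step l), ← Finset.mul_sum,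
      Finset.sum_ite_mem, Finset.univ_inter, hsum, mul_zero]
    rfl
  refine ⟨1 + M, ?_, ?_⟩
  · have hMz : M + M = 0 := by
      ext i k
      show M i k + M i k = (0 : Matrix (Fin m) (Fin m) (ZMod 2)) i k
      rw [CharTwo.add_self_eq_zero]
      rfl
    have : (1 + M) * (1 + M) = 1 + (M + M) + M * M := by
      rw [add_mul, mul_add, mul_add, one_mul, one_mul, mul_one]
      abel
    rw [this, hMM, add_zero, hMz, add_zero]
  · have hMw : M.mulVec w = u := by
      funext i
      rw [Matrix.mulVec]
      show ∑ l, M i l * w l = u i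
      have step : ∀ l, M i l * w l = u i * (if l ∈ J then w l else 0) := by
        intro l
        simp only [hM, Matrix.of_apply]
        split <;> ring
      rw [Finset.sum_congr rfl (fun l _ => step l), ← Finset.mul_sum,
        Finset.sum_ite_mem, Finset.univ_inter, hJ, mul_one]
    rw [Matrix.add_mulVec, Matrix.one_mulVec, hMw]
    funext i
    simp only [Pi.add_apply, hu]
    have : w i + w i = 0 := CharTwo.add_self_eq_zero _
    linear_combination this
noncomputable def Uset (m : ℕ) : Finset (Matrix (Fin m) (Fin m) (ZMod 2)) :=
  @Finset.filter _ (fun A => IsUnit A) (Classical.decPred _) Finset.univ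

lemma mem_Uset {m : ℕ} {A : Matrix (Fin m) (Fin m) (ZMod 2)} : A ∈ Uset m ↔ IsUnit A := by
  simp [Uset]

lemma mulVec_ne_zero_of_mem_Uset {m : ℕ} {A : Matrix (Fin m) (Fin m) (ZMod 2)}
    (hA : A ∈ Uset m) {σ : Fin m → ZMod 2} (hσ : σ ≠ 0) : A.mulVec σ ≠ 0 := by
  rw [mem_Uset] at hA
  intro h0
  apply hσ
  have hBA : (↑hA.unit⁻¹ : Matrix (Fin m) (Fin m) (ZMod 2)) * A = 1 := by
    nth_rewrite 2 [← hA.unit_spec]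
    exact_mod_cast hA.unit.inv_mul
  calc σ = ((↑hA.unit⁻¹ : Matrix (Fin m) (Fin m) (ZMod 2)) * A).mulVec σ := by
        rw [hBA, Matrix.one_mulVec]
    _ = (↑hA.unit⁻¹ : Matrix (Fin m) (Fin m) (ZMod 2)).mulVec (A.mulVec σ) := by
        rw [Matrix.mulVec_mulVec]
    _ = 0 := by rw [h0, Matrix.mulVec_zero]

lemma sum_mul_indVec {n : ℕ} (S : Finset (Fin n)) (v : Fin n → ZMod 2) :
    ∑ j, v j * indVec S j = ∑ j ∈ S, v j := by
  simp only [indVec, mul_ite, mul_one, mul_zero]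
  rw [Finset.sum_ite_mem, Finset.univ_inter]

lemma indVec_ne_zero {n : ℕ} {S : Finset (Fin n)} (hS : 1 ≤ S.card) : indVec S ≠ 0 := by
  obtain ⟨j, hj⟩ := Finset.card_pos.mp hS
  intro h
  have := congrFun h j
  simp [indVec, hj] at this

lemma fiber_card_eq {m : ℕ} (σ : Fin m → ZMod 2) {w w' : Fin m → ZMod 2}
    (hw : w ≠ 0) (hw' : w' ≠ 0) :
    ((Uset m).filter (fun A => A.mulVec σ = w)).card
      = ((Uset m).filter (fun A => A.mulVec σ = w')).card := by
  obtain ⟨g, hg, hgw⟩ := exists_involution_mulVec hw hw'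
  have hgw' : g.mulVec w' = w := by
    rw [← hgw, Matrix.mulVec_mulVec, hg, Matrix.one_mulVec]
  have hgU : IsUnit g := ⟨⟨g, g, hg, hg⟩, rfl⟩
  have key : ∀ (w₀ w₁ : Fin m → ZMod 2), g.mulVec w₀ = w₁ →
      ∀ A ∈ (Uset m).filter (fun A => A.mulVec σ = w₀),
        g * A ∈ (Uset m).filter (fun A => A.mulVec σ = w₁) := by
    intro w₀ w₁ hg01 A hA
    rw [Finset.mem_filter, mem_Uset] at hA ⊢
    refine ⟨hgU.mul hA.1, ?_⟩
    rw [← Matrix.mulVec_mulVec, hA.2, hg01]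
  have hinv : ∀ A : Matrix (Fin m) (Fin m) (ZMod 2), g * (g * A) = A := by
    intro A
    rw [← mul_assoc, hg, one_mul]
  exact Finset.card_bij' (fun A _ => g * A) (fun B _ => g * B)
    (key w w' hgw) (key w' w hgw') (fun A _ => hinv A) (fun B _ => hinv B)

lemma badsig_card {m b : ℕ} {σ : Fin m → ZMod 2} (hσ : σ ≠ 0) :
    ((Uset m).filter (fun A => hammingNorm (A.mulVec σ) < b)).card * (2 ^ m - 1)
      = (∑ v ∈ Finset.Ico 1 b, m.choose v) * (Uset m).card := by
  classical
  set f := ((Uset m).filter (fun A => A.mulVec σ = σ)).card with hf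
  set t0 := (univ : Finset (Fin m → ZMod 2)).filter (fun w => w ≠ 0 ∧ hammingNorm w < b)
  set t1 := (univ : Finset (Fin m → ZMod 2)).filter (fun w => w ≠ 0)
  have hbad : ((Uset m).filter (fun A => hammingNorm (A.mulVec σ) < b)).card
      = ∑ w ∈ t0, ((Uset m).filter (fun A => hammingNorm (A.mulVec σ) < b)
          |>.filter (fun A => A.mulVec σ = w)).card := by
    apply Finset.card_eq_sum_card_fiberwise
    intro A hA
    rw [Finset.mem_coe, Finset.mem_filter] at hA
    simp only [t0, Finset.mem_coe, Finset.mem_filter, Finset.mem_univ, true_and]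
    exact ⟨mulVec_ne_zero_of_mem_Uset hA.1 hσ, hA.2⟩
  have hbad2 : ((Uset m).filter (fun A => hammingNorm (A.mulVec σ) < b)).card
      = ∑ w ∈ t0, f := by
    rw [hbad]
    refine Finset.sum_congr rfl fun w hw => ?_
    simp only [t0, Finset.mem_filter, Finset.mem_univ, true_and] at hw
    have : ((Uset m).filter (fun A => hammingNorm (A.mulVec σ) < b)
          |>.filter (fun A => A.mulVec σ = w))
        = (Uset m).filter (fun A => A.mulVec σ = w) := by
      rw [Finset.filter_filter]
      apply Finset.filter_congr
      intro A _
      constructor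
      · rintro ⟨_, h⟩; exact h
      · intro h; exact ⟨by rw [h]; exact hw.2, h⟩
    rw [this]
    exact fiber_card_eq σ hw.1 hσ
  have hU : (Uset m).card = ∑ w ∈ t1, f := by
    rw [Finset.card_eq_sum_card_fiberwise (f := fun A => A.mulVec σ) (t := t1)
      (fun A hA => by
        simp only [t1, Finset.mem_coe, Finset.mem_filter, Finset.mem_univ, true_and]
        exact mulVec_ne_zero_of_mem_Uset (Finset.mem_coe.mp hA) hσ)]
    refine Finset.sum_congr rfl fun w hw => ?_
    simp only [t1, Finset.mem_filter, Finset.mem_univ, true_and] at hw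
    exact fiber_card_eq σ hw hσ
  have ht0 : t0.card = ∑ v ∈ Finset.Ico 1 b, m.choose v := card_vec_small_weight
  have ht1 : t1.card = 2 ^ m - 1 := by
    have : t1 = (univ : Finset (Fin m → ZMod 2)).erase 0 := by
      ext w; simp [t1, Finset.mem_erase, and_comm]
    rw [this, Finset.card_erase_of_mem (Finset.mem_univ _), Finset.card_univ]
    congr 1
    rw [Fintype.card_fun, ZMod.card, Fintype.card_fin]
  rw [hbad2, hU, Finset.sum_const, Finset.sum_const, smul_eq_mul, smul_eq_mul, ht0, ht1]
  ring

lemma exists_good_matrix {m n b : ℕ} (hm : 1 ≤ m)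
    (σ : Finset (Fin n) → (Fin m → ZMod 2)) (𝒮 : Finset (Finset (Fin n)))
    (hσ : ∀ S ∈ 𝒮, σ S ≠ 0)
    (hcount : 𝒮.card * (∑ v ∈ Finset.Ico 1 b, m.choose v) ≤ 2 ^ m - 2) :
    ∃ A : Matrix (Fin m) (Fin m) (ZMod 2), IsUnit A ∧
      ∀ S ∈ 𝒮, b ≤ hammingNorm (A.mulVec (σ S)) := by
  classical
  set Y := ∑ v ∈ Finset.Ico 1 b, m.choose v with hY
  set bad := (Uset m).filter (fun A => ∃ S ∈ 𝒮, hammingNorm (A.mulVec (σ S)) < b) with hbad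
  have hsub : bad ⊆ 𝒮.biUnion
      (fun S => (Uset m).filter (fun A => hammingNorm (A.mulVec (σ S)) < b)) := by
    intro A hA
    rw [hbad, Finset.mem_filter] at hA
    obtain ⟨hAU, S, hS, hAS⟩ := hA
    exact Finset.mem_biUnion.mpr ⟨S, hS, Finset.mem_filter.mpr ⟨hAU, hAS⟩⟩
  have hble : bad.card * (2 ^ m - 1) ≤ (2 ^ m - 2) * (Uset m).card := by
    calc bad.card * (2 ^ m - 1)
        ≤ (∑ S ∈ 𝒮, ((Uset m).filter
            (fun A => hammingNorm (A.mulVec (σ S)) < b)).card) * (2 ^ m - 1) := by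
          exact Nat.mul_le_mul_right _
            ((Finset.card_le_card hsub).trans (Finset.card_biUnion_le))
      _ = ∑ S ∈ 𝒮, ((Uset m).filter
            (fun A => hammingNorm (A.mulVec (σ S)) < b)).card * (2 ^ m - 1) := by
          rw [Finset.sum_mul]
      _ = ∑ S ∈ 𝒮, Y * (Uset m).card := by
          exact Finset.sum_congr rfl fun S hS => badsig_card (hσ S hS)
      _ = 𝒮.card * Y * (Uset m).card := by
          rw [Finset.sum_const, smul_eq_mul, mul_assoc]
      _ ≤ (2 ^ m - 2) * (Uset m).card := Nat.mul_le_mul_right _ hcount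
  have hUpos : 0 < (Uset m).card := by
    refine Finset.card_pos.mpr ⟨1, ?_⟩
    rw [mem_Uset]
    exact isUnit_one
  have h2m : 2 ≤ 2 ^ m := by
    calc 2 = 2 ^ 1 := rfl
    _ ≤ 2 ^ m := Nat.pow_le_pow_right (by norm_num) hm
  have hlt : bad.card < (Uset m).card := by
    by_contra hcon
    push_neg at hcon
    have h1 : (Uset m).card * (2 ^ m - 1) ≤ bad.card * (2 ^ m - 1) :=
      Nat.mul_le_mul_right _ hcon
    have h2 : (2 ^ m - 2) * (Uset m).card < (2 ^ m - 1) * (Uset m).card :=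
      (Nat.mul_lt_mul_right hUpos).mpr (by omega)
    rw [mul_comm ((Uset m).card)] at h1
    omega
  have : ((Uset m) \ bad).Nonempty := by
    rw [← Finset.card_pos]
    have hss : bad ⊆ Uset m := by rw [hbad]; exact Finset.filter_subset _ _
    have := Finset.card_sdiff_of_subset hss
    omega
  obtain ⟨A, hA⟩ := this
  rw [Finset.mem_sdiff] at hA
  refine ⟨A, mem_Uset.mp hA.1, ?_⟩
  intro S hS
  by_contra hcon
  push_neg at hcon
  exact hA.2 (Finset.mem_filter.mpr ⟨hA.1, S, hS, hcon⟩)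


/-- the dot-product bilinear form on `Fin n → ZMod 2` -/
noncomputable def dotForm (n : ℕ) : LinearMap.BilinForm (ZMod 2) (Fin n → ZMod 2) :=
  LinearMap.mk₂ (ZMod 2) (fun v w => ∑ j, v j * w j)
    (fun x y w => by simp [add_mul, Finset.sum_add_distrib])
    (fun c x w => by simp [Finset.mul_sum, mul_assoc])
    (fun v x y => by simp [mul_add, Finset.sum_add_distrib])
    (fun c v x => by
      simp only [Pi.smul_apply, smul_eq_mul, Finset.mul_sum]
      exact Finset.sum_congr rfl fun j _ => by ring)

lemma dotForm_apply {n : ℕ} (v w : Fin n → ZMod 2) :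
    dotForm n v w = ∑ j, v j * w j := rfl

lemma dotForm_comm {n : ℕ} (v w : Fin n → ZMod 2) : dotForm n v w = dotForm n w v := by
  simp only [dotForm_apply]
  exact Finset.sum_congr rfl fun j _ => mul_comm _ _

lemma dotForm_refl {n : ℕ} : (dotForm n).IsRefl := by
  intro v w h
  rwa [dotForm_comm]

lemma dotForm_nondegenerate {n : ℕ} : (dotForm n).Nondegenerate := by
  refine (LinearMap.IsRefl.nondegenerate_iff_separatingLeft dotForm_refl).mpr ?_
  intro v hv
  funext j
  have := hv (Pi.single j 1)
  rw [dotForm_apply] at this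
  simpa [Pi.single_apply, mul_ite] using this

lemma exists_H0 {n k : ℕ} (C : Submodule (ZMod 2) (Fin n → ZMod 2))
    (hk : Module.finrank (ZMod 2) C = k) :
    ∃ H₀ : Fin (n - k) → Fin n → ZMod 2,
      IsParityCheck H₀ C ∧ ∀ i, H₀ i ∈ (dotForm n).orthogonal C := by
  set B := dotForm n with hB
  set D := B.orthogonal C with hDdef
  have hD : Module.finrank (ZMod 2) D = n - k := by
    rw [hDdef, hB, LinearMap.BilinForm.finrank_orthogonal dotForm_nondegenerate,
      Module.finrank_fin_fun, hk]
  let bas : Module.Basis (Fin (n - k)) (ZMod 2) D :=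
    (Module.finBasis (ZMod 2) D).reindex (finCongr hD)
  refine ⟨fun i => (bas i : Fin n → ZMod 2), ?_, fun i => (bas i).2⟩
  intro x
  constructor
  · intro hx
    have hcomp : (B.flip x).comp D.subtype = 0 := by
      apply Module.Basis.ext bas
      intro i
      simp only [LinearMap.comp_apply, Submodule.subtype_apply, LinearMap.flip_apply,
        LinearMap.zero_apply]
      exact hx i
    have hall : ∀ v ∈ D, B v x = 0 := by
      intro v hv
      have := congrFun (congrArg DFunLike.coe hcomp) ⟨v, hv⟩
      simpa using this
    have hx2 : x ∈ B.orthogonal D := by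
      rw [LinearMap.BilinForm.mem_orthogonal_iff]
      intro v hv
      exact hall v hv
    rwa [hDdef, LinearMap.BilinForm.orthogonal_orthogonal dotForm_nondegenerate
      dotForm_refl] at hx2
  · intro hx i
    have := (bas i).2 x hx
    rw [← dotForm_apply]
    rw [dotForm_comm]
    exact this

lemma TY_bound {n k a b : ℕ} (ha : 1 ≤ a) (hn : 1 ≤ n)
    (hlt : trappingBound n k a b (n - k) < 1) :
    (∑ u ∈ Finset.Icc 1 a, n.choose u) * (∑ v ∈ Finset.Ico 1 b, (n - k).choose v)
      ≤ 2 ^ (n - k) - 2 := by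
  set m := n - k with hm
  rcases Nat.eq_zero_or_pos b with hb | hb
  · simp [hb]
  set T : ℕ := ∑ u ∈ Finset.Icc 1 a, n.choose u with hT
  set Y : ℕ := ∑ v ∈ Finset.Ico 1 b, m.choose v with hYdef
  -- second term nonneg
  have h2pow : ∀ i j : ℕ, i ≤ j → (2:ℝ)^i ≤ 2^j := fun i j hij =>
    pow_le_pow_right₀ (by norm_num) hij
  have hsec : 0 ≤ (∑ r ∈ Finset.range (m + 1), ((m - r : ℕ) : ℝ) * gaussBinom2 m r *
        ∏ i ∈ Finset.range r, ((2 : ℝ) ^ m - 2 ^ i)) / 2 ^ (m * m) := by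
    apply div_nonneg _ (by positivity)
    apply Finset.sum_nonneg
    intro r hr
    rw [Finset.mem_range] at hr
    apply mul_nonneg (mul_nonneg (by positivity) ?_) ?_
    · apply Finset.prod_nonneg
      intro i _
      apply div_nonneg
      · have : (1:ℝ) ≤ 2 ^ (m - i) := one_le_pow₀ (by norm_num)
        linarith
      · have : (2:ℝ)^1 ≤ 2^(i+1) := h2pow 1 (i+1) (by omega)
        norm_num at this
        linarith
    · apply Finset.prod_nonneg
      intro i hi
      rw [Finset.mem_range] at hi
      have := h2pow i m (by omega)
      linarith
  have hfirst : (∑ u ∈ Finset.Icc 1 a, (n.choose u : ℝ) *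
      ∑ i ∈ Finset.range (b + 1), (i : ℝ) * (m.choose (b - i) : ℝ)) / 2 ^ m < 1 := by
    unfold trappingBound at hlt
    rw [← hm] at hlt
    linarith
  -- rewrite inner sum as a natural number
  set N : ℕ := ∑ v ∈ Finset.range (b + 1), (b - v) * m.choose v with hN
  have hG : (∑ i ∈ Finset.range (b + 1), (i : ℝ) * (m.choose (b - i) : ℝ)) = (N : ℝ) := by
    rw [← Finset.sum_range_reflect (fun j => (j : ℝ) * (m.choose (b - j) : ℝ)) (b + 1)]
    rw [hN]
    push_cast
    refine Finset.sum_congr rfl fun j hj => ?_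
    rw [Finset.mem_range] at hj
    have h1 : b + 1 - 1 - j = b - j := by omega
    have h2 : b - (b - j) = j := by omega
    rw [h2]
  have hTN : T * N < 2 ^ m := by
    have hnum : (∑ u ∈ Finset.Icc 1 a, (n.choose u : ℝ) *
        ∑ i ∈ Finset.range (b + 1), (i : ℝ) * (m.choose (b - i) : ℝ)) = (T : ℝ) * N := by
      rw [hG, ← Finset.sum_mul, hT]
      push_cast
      ring
    rw [hnum, div_lt_one (by positivity)] at hfirst
    have : ((T * N : ℕ) : ℝ) < ((2 ^ m : ℕ) : ℝ) := by push_cast; linarith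
    exact_mod_cast this
  -- N ≥ b + Y
  have hNbY : b + Y ≤ N := by
    have hsub : Finset.range b ⊆ Finset.range (b + 1) :=
      Finset.range_subset_range.mpr (by omega)
    have hle1 : ∑ v ∈ Finset.range b, (b - v) * m.choose v ≤ N :=
      Finset.sum_le_sum_of_subset hsub
    have hins : Finset.range b = insert 0 (Finset.Ico 1 b) := by
      ext x
      simp only [Finset.mem_range, Finset.mem_insert, Finset.mem_Ico]
      omega
    rw [hins, Finset.sum_insert (by simp)] at hle1
    have : Y ≤ ∑ v ∈ Finset.Ico 1 b, (b - v) * m.choose v := by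
      rw [hYdef]
      apply Finset.sum_le_sum
      intro v hv
      rw [Finset.mem_Ico] at hv
      exact Nat.le_mul_of_pos_left _ (by omega)
    simp only [Nat.sub_zero, Nat.choose_zero_right, mul_one] at hle1
    omega
  have hT1 : 1 ≤ T := by
    have h1 : n.choose 1 ≤ T := by
      apply Finset.single_le_sum (f := fun u => n.choose u) (fun _ _ => Nat.zero_le _)
      rw [Finset.mem_Icc]; exact ⟨le_refl 1, ha⟩
    rw [Nat.choose_one_right] at h1
    omega
  have key : T * (b + Y) ≤ T * N := Nat.mul_le_mul_left _ hNbY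
  rw [Nat.mul_add] at key
  have hbT : T ≤ T * b := Nat.le_mul_of_pos_right _ hb
  have expand : T * Y ≤ 2 ^ m - 2 := by
    have h1 : T * b + T * Y < 2 ^ m := lt_of_le_of_lt key hTN
    omega
  exact expand

theorem collective_trapping_redundancy_eq_of_bound_lt_one {n k d a b : ℕ}
    (C : Submodule (ZMod 2) (Fin n → ZMod 2))
    (hk : Module.finrank (ZMod 2) C = k)
    (hd₁ : ∀ c ∈ C, c ≠ 0 → d ≤ hammingNorm c)
    (hd₂ : ∃ c ∈ C, c ≠ 0 ∧ hammingNorm c = d)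
    (ha : 1 ≤ a) (had : a ≤ d - 1)
    (hlt : trappingBound n k a b (n - k) < 1) :
    (∃ H : Fin (n - k) → Fin n → ZMod 2, IsParityCheck H C ∧
      ∀ u v : ℕ, 1 ≤ u → u ≤ a → v < b → ¬ HasTrappingSet H u v) ∧
    collectiveTrappingRedundancy C a b = n - k := by
  classical
  set m := n - k with hm
  have hd2 : 2 ≤ d := by omega
  have hn : 1 ≤ n := by
    obtain ⟨c, hcC, hc0, hcd⟩ := hd₂
    by_contra h
    push_neg at h
    exact hc0 (funext fun i => absurd i.isLt (by omega))
  have hkn : k < n := by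
    by_contra hcon
    push_neg at hcon
    have hkle : k ≤ n := by
      have := Submodule.finrank_le C
      rwa [hk, Module.finrank_fin_fun] at this
    have hCtop : C = ⊤ := by
      apply Submodule.eq_top_of_finrank_eq
      rw [hk, Module.finrank_fin_fun]
      omega
    have hxC : indVec ({⟨0, by omega⟩} : Finset (Fin n)) ∈ C := by
      simp [hCtop]
    have hd1 := hd₁ _ hxC (indVec_ne_zero (by simp))
    rw [hammingNorm_indVec] at hd1
    simp at hd1
    omega
  have hm1 : 1 ≤ m := by omega
  obtain ⟨H₀, hH₀, -⟩ := exists_H0 C hk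
  set σ : Finset (Fin n) → (Fin m → ZMod 2) := fun S => fun i => ∑ j ∈ S, H₀ i j with hσ
  set 𝒮 := (univ : Finset (Finset (Fin n))).filter (fun S => 1 ≤ S.card ∧ S.card ≤ a) with h𝒮
  have hσne : ∀ S ∈ 𝒮, σ S ≠ 0 := by
    intro S hS h0
    rw [h𝒮, Finset.mem_filter] at hS
    have hxC : indVec S ∈ C := by
      apply (hH₀ (indVec S)).mp
      intro i
      rw [sum_mul_indVec S (H₀ i)]
      exact congrFun h0 i
    have hd1 := hd₁ _ hxC (indVec_ne_zero hS.2.1)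
    rw [hammingNorm_indVec] at hd1
    have := hS.2.2
    omega
  have hScard : 𝒮.card = ∑ u ∈ Finset.Icc 1 a, n.choose u := by
    have he : 𝒮 = (univ : Finset (Finset (Fin n))).filter
        (fun S => S.card ∈ Finset.Icc 1 a) := by
      ext S
      simp [h𝒮, Finset.mem_Icc]
    rw [he, card_filter_card_mem, Fintype.card_fin]
  have hcount : 𝒮.card * (∑ v ∈ Finset.Ico 1 b, m.choose v) ≤ 2 ^ m - 2 := by
    rw [hScard]
    exact TY_bound ha hn hlt
  obtain ⟨A, hAunit, hAgood⟩ := exists_good_matrix hm1 σ 𝒮 hσne hcount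
  set H : Fin m → Fin n → ZMod 2 := fun i j => ∑ l, A i l * H₀ l j with hH
  have key1 : ∀ (x : Fin n → ZMod 2) (i : Fin m),
      ∑ j, H i j * x j = (A.mulVec (fun l => ∑ j, H₀ l j * x j)) i := by
    intro x i
    show ∑ j, (∑ l, A i l * H₀ l j) * x j = ∑ l, A i l * (∑ j, H₀ l j * x j)
    simp_rw [Finset.sum_mul, Finset.mul_sum, mul_assoc]
    rw [Finset.sum_comm]
  have hpc : IsParityCheck H C := by
    intro x
    rw [← hH₀ x]
    constructor
    · intro h
      have hy : A.mulVec (fun l => ∑ j, H₀ l j * x j) = 0 :=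
        funext fun i => by rw [← key1 x i]; exact h i
      have hyz : (fun l => ∑ j, H₀ l j * x j) = 0 := by
        by_contra h0
        exact mulVec_ne_zero_of_mem_Uset (mem_Uset.mpr hAunit) h0 hy
      intro i
      exact congrFun hyz i
    · intro h i
      rw [key1 x i]
      have hz : (fun l => ∑ j, H₀ l j * x j) = 0 := funext fun l => h l
      rw [hz, Matrix.mulVec_zero]
      rfl
  have hnotrap : ∀ u v : ℕ, 1 ≤ u → u ≤ a → v < b → ¬ HasTrappingSet H u v := by
    intro u v hu hua hvb htrap
    obtain ⟨S, hScard', hncard⟩ := htrap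
    have hSmem : S ∈ 𝒮 := by
      rw [h𝒮, Finset.mem_filter]
      refine ⟨Finset.mem_univ _, ?_, ?_⟩ <;> omega
    have hb' := hAgood S hSmem
    have hrow : ∀ i, ∑ j ∈ S, H i j = (A.mulVec (σ S)) i := by
      intro i
      show ∑ j ∈ S, ∑ l, A i l * H₀ l j = ∑ l, A i l * σ S l
      rw [Finset.sum_comm]
      exact Finset.sum_congr rfl fun l _ => by rw [Finset.mul_sum]
    have hset : {i : Fin m | ∑ j ∈ S, H i j = 1}
        = ↑(univ.filter (fun i => (A.mulVec (σ S)) i = 1)) := by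
      ext i
      simp [hrow i]
    rw [hset, Set.ncard_coe_finset] at hncard
    have hwt : hammingNorm (A.mulVec (σ S)) = v := by
      rw [hammingNorm_eq_card_filter_one]
      exact hncard
    omega
  refine ⟨⟨H, hpc, hnotrap⟩, ?_⟩
  unfold collectiveTrappingRedundancy
  apply le_antisymm
  · apply Nat.sInf_le
    exact ⟨H, hpc, hnotrap⟩
  · refine le_csInf ⟨m, H, hpc, hnotrap⟩ ?_
    rintro m' ⟨H', hpc', -⟩
    set L : (Fin n → ZMod 2) →ₗ[ZMod 2] (Fin m' → ZMod 2) :=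
      (Matrix.of H').mulVecLin with hL
    have happ : ∀ (x : Fin n → ZMod 2) (i : Fin m'), L x i = ∑ j, H' i j * x j := by
      intro x i
      rfl
    have hker : LinearMap.ker L = C := by
      ext x
      rw [LinearMap.mem_ker]
      constructor
      · intro hx
        apply (hpc' x).mp
        intro i
        rw [← happ x i, hx]
        rfl
      · intro hx
        funext i
        rw [happ x i]
        exact (hpc' x).mpr hx i
    have hrn := LinearMap.finrank_range_add_finrank_ker L
    rw [hker, hk, Module.finrank_fin_fun] at hrn
    have hr : Module.finrank (ZMod 2) (LinearMap.range L) ≤ m' := by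
      have := Submodule.finrank_le (LinearMap.range L)
      rwa [Module.finrank_fin_fun] at this
    omega
end

section
/- Let C be a binary [n,k,d] linear code with d ≥ 2. Then the 2^{n-k} × n matrix whose rows are exactly the codewords of the dual code C^⊥ is an orthogonal array OA(2^{n-k}, n, 2, d-1); that is, for every set S of d-1 distinct coordinate positions and every vector v ∈ F_2^{d-1}, the number of codewords c ∈ C^⊥ whose restriction to S equals v satisfies (that number) · 2^{d-1} = 2^{n-k}. -/
open Finset

/-- `M` (an `m × n` matrix given by its rows, over an alphabet `Γ` of size `l`)
is an orthogonal array of strength `s`: in the submatrix determined by any `s`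
distinct columns, every vector of length `s` appears exactly `m / l^s` times
as a row (stated multiplicatively: the count times `l^s` equals `m`). -/
def IsOrthogonalArray {m n : ℕ} {Γ : Type*} [Fintype Γ]
    (M : Fin m → Fin n → Γ) (l s : ℕ) : Prop :=
  Fintype.card Γ = l ∧
  ∀ S : Finset (Fin n), S.card = s → ∀ v : Fin n → Γ,
    Set.ncard {i : Fin m | ∀ j ∈ S, M i j = v j} * l ^ s = m

section OAAux

open Module LinearMap

noncomputable section

/-- dot product bilinear form over ZMod 2 -/
def dotF (ι : Type*) [Fintype ι] : LinearMap.BilinForm (ZMod 2) (ι → ZMod 2) :=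
  LinearMap.mk₂ (ZMod 2) (fun v c => ∑ j, v j * c j)
    (fun m₁ m₂ nn => by simp [add_mul, Finset.sum_add_distrib])
    (fun c m nn => by simp [Finset.mul_sum, mul_assoc])
    (fun m n₁ n₂ => by simp [mul_add, Finset.sum_add_distrib])
    (fun c m nn => by simp [Finset.mul_sum, mul_assoc, mul_left_comm])

lemma dotF_apply {ι : Type*} [Fintype ι] (v c : ι → ZMod 2) :
    dotF ι v c = ∑ j, v j * c j := rfl

lemma dotF_refl (ι : Type*) [Fintype ι] : (dotF ι).IsRefl := by
  intro x y h
  simpa [dotF_apply, mul_comm] using h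

lemma dotF_nondeg (ι : Type*) [Fintype ι] [DecidableEq ι] : (dotF ι).Nondegenerate := by
  constructor
  · intro m h
    funext j
    simpa [dotF_apply, Pi.single_apply, mul_ite] using h (Pi.single j 1)
  · intro m h
    funext j
    simpa [dotF_apply, Pi.single_apply, ite_mul] using h (Pi.single j 1)

lemma card_eq_pow_finrank_F2 (M : Type*) [AddCommGroup M] [Module (ZMod 2) M]
    [FiniteDimensional (ZMod 2) M] : Nat.card M = 2 ^ finrank (ZMod 2) M := by
  have : Finite M := Module.finite_of_finite (ZMod 2)
  have : Fintype M := Fintype.ofFinite M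
  rw [Nat.card_eq_fintype_card, card_eq_pow_finrank (K := ZMod 2), ZMod.card]

lemma finrank_orth {ι : Type*} [Fintype ι] [DecidableEq ι]
    (W : Submodule (ZMod 2) (ι → ZMod 2)) :
    finrank (ZMod 2) ((dotF ι).orthogonal W) = Fintype.card ι - finrank (ZMod 2) W := by
  rw [LinearMap.BilinForm.finrank_orthogonal (dotF_nondeg ι) W,
    Module.finrank_fintype_fun_eq_card]

lemma orth_orth {ι : Type*} [Fintype ι] [DecidableEq ι]
    (W : Submodule (ZMod 2) (ι → ZMod 2)) :
    (dotF ι).orthogonal ((dotF ι).orthogonal W) = W :=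
  LinearMap.BilinForm.orthogonal_orthogonal (dotF_nondeg ι) (dotF_refl ι) W

lemma dualCode_eq_orth {n : ℕ} (C : Submodule (ZMod 2) (Fin n → ZMod 2)) :
    dualCode C = ↑((dotF (Fin n)).orthogonal C) := by
  ext w
  constructor
  · intro h c hc
    show dotF (Fin n) c w = 0
    rw [dotF_apply]
    simpa [mul_comm] using h c hc
  · intro h c hc
    have := h c hc
    rw [dotF_apply] at this
    simpa [mul_comm] using this

lemma key_count {n k d : ℕ} (C : Submodule (ZMod 2) (Fin n → ZMod 2))
    (hk : finrank (ZMod 2) C = k)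
    (hd₁ : ∀ c ∈ C, c ≠ 0 → d ≤ hammingNorm c) (hd2 : 2 ≤ d)
    (S : Finset (Fin n)) (hS : S.card = d - 1) (v : Fin n → ZMod 2) :
    Set.ncard {c ∈ dualCode C | ∀ j ∈ S, c j = v j} * 2 ^ (d - 1) = 2 ^ (n - k) := by
  classical
  set D := (dotF (Fin n)).orthogonal C with hD
  set π : D →ₗ[ZMod 2] (↥S → ZMod 2) :=
    (LinearMap.funLeft (ZMod 2) (ZMod 2) (Subtype.val : ↥S → Fin n)).comp D.subtype with hπ
  have hπ_apply : ∀ (c : D) (i : ↥S), π c i = (c : Fin n → ZMod 2) ↑i := fun c i => rfl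
  -- surjectivity of the restriction map
  have hrange : LinearMap.range π = ⊤ := by
    have horth : (dotF ↥S).orthogonal (LinearMap.range π) = ⊥ := by
      rw [eq_bot_iff]
      intro w hw
      set w' : Fin n → ZMod 2 := fun j => if h : j ∈ S then w ⟨j, h⟩ else 0 with hw'
      have hw'C : w' ∈ C := by
        rw [← orth_orth C]
        intro c hc
        show dotF (Fin n) c w' = 0
        have h1 : ∑ j : Fin n, c j * w' j = ∑ j ∈ S, c j * w' j :=
          (Finset.sum_subset S.subset_univ (fun x _ hx => by simp [hw', hx])).symm
        have h2 : ∑ j ∈ S, c j * w' j = ∑ i : ↥S, c ↑i * w i := by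
          rw [← Finset.sum_coe_sort S (fun j => c j * w' j)]
          exact Finset.sum_congr rfl fun i _ => by simp [hw', i.2]
        have h3 := hw (π ⟨c, hc⟩) ⟨⟨c, hc⟩, rfl⟩
        rw [dotF_apply] at h3
        rw [dotF_apply, h1, h2]
        simpa [hπ_apply] using h3
      have hw'0 : w' = 0 := by
        by_contra h
        have h1 := hd₁ w' hw'C h
        have h2 : hammingNorm w' ≤ S.card := by
          rw [hammingNorm]
          refine Finset.card_le_card fun j hj => ?_
          simp only [Finset.mem_filter, Finset.mem_univ, true_and] at hj
          by_contra hjS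
          exact hj (by simp [hw', hjS])
        omega
      have : ∀ i : ↥S, w i = 0 := fun i => by
        have := congrFun hw'0 ↑i
        simpa [hw', i.2] using this
      exact funext this
    have h2 := orth_orth (ι := ↥S) (LinearMap.range π)
    rw [horth] at h2
    simpa using h2.symm
  have hπsurj : Function.Surjective π := LinearMap.range_eq_top.mp hrange
  obtain ⟨c₀, hc₀⟩ := hπsurj (fun i => v ↑i)
  -- the fiber is a translate of the kernel
  set f : ↥(LinearMap.ker π) → (Fin n → ZMod 2) :=
    fun x => ((x : D) : Fin n → ZMod 2) + ((c₀ : D) : Fin n → ZMod 2) with hf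
  have hsetL : {c ∈ dualCode C | ∀ j ∈ S, c j = v j} = Set.range f := by
    ext c
    constructor
    · rintro ⟨hc1, hc2⟩
      rw [dualCode_eq_orth] at hc1
      refine ⟨⟨⟨c, hc1⟩ - c₀, ?_⟩, by simp [hf]⟩
      rw [LinearMap.mem_ker, map_sub, hc₀]
      funext i
      simp [hπ_apply, hc2 ↑i i.2]
    · rintro ⟨x, rfl⟩
      constructor
      · rw [dualCode_eq_orth]
        exact ((x : D) + c₀).2
      · intro j hj
        have h1 : π ((x : D) + c₀) = fun i : ↥S => v ↑i := by
          rw [map_add, LinearMap.mem_ker.mp x.2, zero_add, hc₀]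
        have := congrFun h1 ⟨j, hj⟩
        simpa [hπ_apply, hf] using this
  have hfinj : Function.Injective f := by
    intro a b hab
    have : ((a : D) : Fin n → ZMod 2) = ((b : D) : Fin n → ZMod 2) := by
      have := add_right_cancel hab
      exact this
    exact Subtype.ext (Subtype.ext this)
  have hcard1 : Set.ncard {c ∈ dualCode C | ∀ j ∈ S, c j = v j}
      = Nat.card ↥(LinearMap.ker π) := by
    rw [hsetL, ← Nat.card_coe_set_eq, Nat.card_range_of_injective hfinj]
  -- dimension count
  have hDrank : finrank (ZMod 2) D = n - k := by
    rw [hD, finrank_orth, hk, Fintype.card_fin]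
  have hkerrank : (d - 1) + finrank (ZMod 2) (LinearMap.ker π) = n - k := by
    have := LinearMap.finrank_range_add_finrank_ker π
    rw [hrange, finrank_top, Module.finrank_fintype_fun_eq_card, Fintype.card_coe, hS,
      hDrank] at this
    exact this
  rw [hcard1, card_eq_pow_finrank_F2, ← pow_add]
  rw [add_comm] at hkerrank
  rw [hkerrank]

end

end OAAux

theorem dual_code_is_orthogonal_array {n k d : ℕ}
    (C : Submodule (ZMod 2) (Fin n → ZMod 2))
    (hk : Module.finrank (ZMod 2) C = k)
    (hd₁ : ∀ c ∈ C, c ≠ 0 → d ≤ hammingNorm c)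
    (hd₂ : ∃ c ∈ C, c ≠ 0 ∧ hammingNorm c = d)
    (hd2 : 2 ≤ d) :
    (∀ H : Fin (2 ^ (n - k)) → Fin n → ZMod 2,
      Function.Injective H → Set.range H = dualCode C →
      IsOrthogonalArray H 2 (d - 1)) ∧
    ∀ S : Finset (Fin n), S.card = d - 1 → ∀ v : Fin n → ZMod 2,
      Set.ncard {c ∈ dualCode C | ∀ j ∈ S, c j = v j} * 2 ^ (d - 1)
        = 2 ^ (n - k) := by
  have main := key_count C hk hd₁ hd2
  refine ⟨fun H hinj hrange => ⟨by simp, fun S hS v => ?_⟩, main⟩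
  have himg : H '' {i | ∀ j ∈ S, H i j = v j} = {c ∈ dualCode C | ∀ j ∈ S, c j = v j} := by
    ext c
    constructor
    · rintro ⟨i, hi, rfl⟩
      exact ⟨hrange ▸ Set.mem_range_self i, hi⟩
    · rintro ⟨hc1, hc2⟩
      obtain ⟨i, rfl⟩ := hrange.symm ▸ hc1
      exact ⟨i, hc2, rfl⟩
  calc Set.ncard {i : Fin (2 ^ (n - k)) | ∀ j ∈ S, H i j = v j} * 2 ^ (d - 1)
      = Set.ncard (H '' {i | ∀ j ∈ S, H i j = v j}) * 2 ^ (d - 1) := by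
        rw [Set.ncard_image_of_injective _ hinj]
    _ = 2 ^ (n - k) := by rw [himg]; exact main S hS v
end

section
/- Let C be a binary [n,k,d] linear code with k < n, let 1 ≤ a ≤ d-1 and b ≥ 0, and let H_t be any t × n matrix over F_2 all of whose rows belong to C^⊥. For a nonempty set S of column positions, let odd(S) denote the number of rows of H_t with odd Hamming weight on S. Define Z = (n - k - rank(H_t)) + Σ_{u=1}^{a} Σ_{S : |S| = u} max(b - odd(S), 0). Then there exists a parity-check matrix H for C with at most t + Z rows, obtained by appending at most Z rows from C^⊥ to H_t, such that H contains no (u,v)-trapping set for any 1 ≤ u ≤ a and 0 ≤ v ≤ b-1. -/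
open Finset

/-- The number of rows of `H` having odd Hamming weight on the column set `S`. -/
noncomputable def oddRows {n : ℕ} {ι : Type*} (H : ι → Fin n → ZMod 2)
    (S : Finset (Fin n)) : ℕ :=
  Set.ncard {i : ι | ∑ j ∈ S, H i j = 1}

namespace TrapAux

noncomputable def dotB (n : ℕ) : LinearMap.BilinForm (ZMod 2) (Fin n → ZMod 2) :=
  LinearMap.mk₂ (ZMod 2) (fun x y => ∑ j, x j * y j)
    (by intros; simp [add_mul, Finset.sum_add_distrib])
    (by intros; simp [Finset.mul_sum, mul_assoc])
    (by intros; simp [mul_add, Finset.sum_add_distrib])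
    (by intros; simp [Finset.mul_sum, mul_left_comm])

lemma dotB_apply {n : ℕ} (x y : Fin n → ZMod 2) : dotB n x y = ∑ j, x j * y j := rfl

lemma dotB_symm {n : ℕ} (x y : Fin n → ZMod 2) : dotB n x y = dotB n y x := by
  simp [dotB_apply, mul_comm]

lemma dotB_refl {n : ℕ} : (dotB n).IsRefl := fun x y h => by rw [dotB_symm]; exact h

lemma dotB_nondeg {n : ℕ} : (dotB n).Nondegenerate := by
  have hL : ∀ x : Fin n → ZMod 2, (∀ y, dotB n x y = 0) → x = 0 := by
    intro x hx
    funext j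
    have := hx (Pi.single j 1)
    simpa [dotB_apply, Pi.single_apply, mul_ite] using this
  exact ⟨hL, fun y hy => hL y (fun x => by rw [dotB_symm]; exact hy x)⟩

lemma exists_extend {K V : Type*} [Field K] [AddCommGroup V] [Module K V]
    [FiniteDimensional K V] (D W : Submodule K V) (hWD : W ≤ D) :
    ∃ g : Fin (Module.finrank K D - Module.finrank K W) → V,
      (∀ i, g i ∈ D) ∧ ∀ x ∈ D, x ∈ W ⊔ Submodule.span K (Set.range g) := by
  classical
  set W' : Submodule K D := W.comap D.subtype with hW'
  have hfr : Module.finrank K W' = Module.finrank K W :=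
    (Submodule.comapSubtypeEquivOfLe hWD).finrank_eq
  have hq : Module.finrank K (D ⧸ W') + Module.finrank K W' = Module.finrank K D :=
    Submodule.finrank_quotient_add_finrank W'
  have hm : Module.finrank K (D ⧸ W') = Module.finrank K D - Module.finrank K W := by omega
  let bQ := Module.finBasis K (D ⧸ W')
  have hsurj := Submodule.Quotient.mk_surjective W'
  choose lift hlift using fun i => hsurj (bQ (Fin.cast hm.symm i))
  refine ⟨fun i => (lift i : V), fun i => (lift i).2, fun x hx => ?_⟩
  have hspan : Submodule.span K (Set.range lift) ⊔ W' = ⊤ := by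
    have h1 : Submodule.map W'.mkQ (Submodule.span K (Set.range lift)) = ⊤ := by
      rw [Submodule.map_span, ← Set.range_comp]
      have he : (W'.mkQ ∘ lift) = fun i => bQ (finCongr hm.symm i) := by
        funext i; simpa [Submodule.mkQ_apply] using hlift i
      rw [he]
      have hr : Set.range (fun i => bQ (finCongr hm.symm i)) = Set.range bQ :=
        Function.Surjective.range_comp (finCongr hm.symm).surjective bQ
      rw [hr, bQ.span_eq]
    have h2 := Submodule.comap_map_eq W'.mkQ (Submodule.span K (Set.range lift))
    rw [h1, Submodule.comap_top, Submodule.ker_mkQ] at h2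
    exact h2.symm
  have hx' : (⟨x, hx⟩ : D) ∈ Submodule.span K (Set.range lift) ⊔ W' := hspan ▸ Submodule.mem_top
  have hmem := Submodule.mem_map_of_mem (f := D.subtype) hx'
  rw [Submodule.map_sup, Submodule.map_span, ← Set.range_comp] at hmem
  rw [Submodule.map_comap_subtype, inf_eq_right.mpr hWD] at hmem
  simpa [Function.comp_def, sup_comm] using hmem

lemma ncard_sum {α β : Type*} [Finite α] [Finite β] (P : α ⊕ β → Prop) :
    Set.ncard {x | P x} =
      Set.ncard {a | P (Sum.inl a)} + Set.ncard {b | P (Sum.inr b)} := by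
  classical
  have h : {x | P x} = Sum.inl '' {a | P (Sum.inl a)} ∪ Sum.inr '' {b | P (Sum.inr b)} := by
    ext x; cases x <;> simp
  rw [h, Set.ncard_union_eq, Set.ncard_image_of_injective _ Sum.inl_injective,
    Set.ncard_image_of_injective _ Sum.inr_injective]
  simp [Set.disjoint_left]

end TrapAux

theorem append_rows_to_avoid_trapping_sets {n k d a b t : ℕ}
    (C : Submodule (ZMod 2) (Fin n → ZMod 2))
    (hk : Module.finrank (ZMod 2) C = k)
    (hd₁ : ∀ c ∈ C, c ≠ 0 → d ≤ hammingNorm c)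
    (hd₂ : ∃ c ∈ C, c ≠ 0 ∧ hammingNorm c = d)
    (hkn : k < n) (ha : 1 ≤ a) (had : a ≤ d - 1)
    (Ht : Fin t → Fin n → ZMod 2) (hrows : ∀ i, Ht i ∈ dualCode C) :
    ∃ (s : ℕ) (E : Fin s → Fin n → ZMod 2),
      s ≤ (n - k - Module.finrank (ZMod 2)
              (Submodule.span (ZMod 2) (Set.range Ht)))
          + ∑ u ∈ Finset.Icc 1 a,
              ∑ S ∈ Finset.powersetCard u (Finset.univ : Finset (Fin n)),
                (b - oddRows Ht S) ∧
      (∀ i, E i ∈ dualCode C) ∧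
      IsParityCheck (Sum.elim Ht E) C ∧
      ∀ u v : ℕ, 1 ≤ u → u ≤ a → v < b →
        ¬ HasTrappingSet (Sum.elim Ht E) u v := by
  classical
  have hfinV : Module.finrank (ZMod 2) (Fin n → ZMod 2) = n := by
    simp [Module.finrank_pi]
  set D : Submodule (ZMod 2) (Fin n → ZMod 2) := (TrapAux.dotB n).orthogonal C with hDdef
  have hmemD : ∀ v, v ∈ D ↔ v ∈ dualCode C := by
    intro v
    constructor
    · intro hv c hc
      have h := hv c hc
      rw [show (∑ j, v j * c j) = TrapAux.dotB n v c from rfl, TrapAux.dotB_symm]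
      exact h
    · intro hv c hc
      show (TrapAux.dotB n) c v = 0
      rw [TrapAux.dotB_symm]
      exact hv c hc
  have hCorth : (TrapAux.dotB n).orthogonal D = C :=
    LinearMap.BilinForm.orthogonal_orthogonal TrapAux.dotB_nondeg TrapAux.dotB_refl C
  have hfrD : Module.finrank (ZMod 2) D = n - k := by
    rw [hDdef, LinearMap.BilinForm.finrank_orthogonal TrapAux.dotB_nondeg,
      hfinV, hk]
  obtain ⟨c0, hc0C, hc0ne, hc0d⟩ := hd₂
  have hd1 : 1 ≤ d := by
    rw [← hc0d]
    exact Nat.one_le_iff_ne_zero.mpr (fun h0 => hc0ne (hammingNorm_eq_zero.mp h0))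
  have hadlt : a < d := by omega
  -- for every small column set there is a dual vector odd on it
  have key : ∀ S : Finset (Fin n), 1 ≤ S.card → S.card ≤ a →
      ∃ h, h ∈ D ∧ ∑ j ∈ S, h j = 1 := by
    intro S h1 h2
    set ind : Fin n → ZMod 2 := fun j => if j ∈ S then 1 else 0 with hind
    have hindnorm : hammingNorm ind = S.card := by
      unfold hammingNorm
      congr 1
      ext j
      simp [hind]
    have hindC : ind ∉ C := by
      intro hmem
      have hne : ind ≠ 0 := by
        obtain ⟨j, hj⟩ := Finset.card_pos.mp h1
        intro h0
        have := congrFun h0 j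
        simp [hind, hj] at this
      have := hd₁ ind hmem hne
      rw [hindnorm] at this
      omega
    have hno : ind ∉ (TrapAux.dotB n).orthogonal D := by
      rw [hCorth]; exact hindC
    rw [LinearMap.BilinForm.mem_orthogonal_iff] at hno
    push_neg at hno
    obtain ⟨h, hhD, hne⟩ := hno
    refine ⟨h, hhD, ?_⟩
    have hsum : (TrapAux.dotB n) h ind = ∑ j ∈ S, h j := by
      rw [TrapAux.dotB_apply]
      rw [Finset.sum_congr rfl (fun j _ => by simp [hind, mul_ite] : ∀ j ∈ Finset.univ,
        h j * ind j = if j ∈ S then h j else 0)]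
      simp [Finset.sum_ite_mem]
    rw [hsum] at hne
    revert hne
    generalize (∑ j ∈ S, h j) = z
    revert z; decide
  choose hfun hfunD hfun1 using key
  -- complete the span of the given rows to the whole dual code
  set W := Submodule.span (ZMod 2) (Set.range Ht) with hWdef
  have hWD : W ≤ D :=
    Submodule.span_le.mpr (by rintro _ ⟨i, rfl⟩; exact (hmemD _).mpr (hrows i))
  obtain ⟨g, hgD, hgspan⟩ := TrapAux.exists_extend D W hWD
  have hmval : Module.finrank (ZMod 2) D - Module.finrank (ZMod 2) W
      = n - k - Module.finrank (ZMod 2) W := by rw [hfrD]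
  -- the repeated rows fixing the deficiencies
  let ι₂ : Type := Σ u : (Finset.Icc 1 a),
    Σ S : (Finset.powersetCard (u : ℕ) (Finset.univ : Finset (Fin n))),
      Fin (b - oddRows Ht S.1)
  have hcard : Fintype.card ι₂ =
      ∑ u ∈ Finset.Icc 1 a,
        ∑ S ∈ Finset.powersetCard u (Finset.univ : Finset (Fin n)), (b - oddRows Ht S) := by
    rw [Fintype.card_sigma]
    rw [← Finset.sum_coe_sort (Finset.Icc 1 a)
      (fun u => ∑ S ∈ Finset.powersetCard u (Finset.univ : Finset (Fin n)), (b - oddRows Ht S))]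
    refine Finset.sum_congr rfl fun u _ => ?_
    rw [Fintype.card_sigma]
    rw [← Finset.sum_coe_sort (Finset.powersetCard (u : ℕ) (Finset.univ : Finset (Fin n)))
      (fun S => b - oddRows Ht S)]
    exact Finset.sum_congr rfl fun S _ => by simp
  let rowFun : ι₂ → (Fin n → ZMod 2) := fun x =>
    hfun x.2.1.1
      (by
        have hu := Finset.mem_Icc.mp x.1.2
        have hS := Finset.mem_powersetCard_univ.mp x.2.1.2
        omega)
      (by
        have hu := Finset.mem_Icc.mp x.1.2
        have hS := Finset.mem_powersetCard_univ.mp x.2.1.2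
        omega)
  let F : (Fin (Module.finrank (ZMod 2) D - Module.finrank (ZMod 2) W) ⊕ ι₂) → (Fin n → ZMod 2) := Sum.elim g rowFun
  have hFD : ∀ x, F x ∈ D := by
    rintro (i | y)
    · exact hgD i
    · exact hfunD _ _ _
  let e : (Fin (Module.finrank (ZMod 2) D - Module.finrank (ZMod 2) W) ⊕ ι₂) ≃ Fin (Module.finrank (ZMod 2) D - Module.finrank (ZMod 2) W + Fintype.card ι₂) :=
    (Equiv.sumCongr (Equiv.refl (Fin (Module.finrank (ZMod 2) D - Module.finrank (ZMod 2) W))) (Fintype.equivFin ι₂)).trans finSumFinEquiv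
  refine ⟨Module.finrank (ZMod 2) D - Module.finrank (ZMod 2) W + Fintype.card ι₂, fun i => F (e.symm i), ?_, ?_, ?_, ?_⟩
  · exact le_of_eq (by rw [hmval, hcard])
  · intro i
    exact (hmemD _).mp (hFD (e.symm i))
  · intro x
    constructor
    · intro hx
      have hxD : x ∈ (TrapAux.dotB n).orthogonal D := by
        intro y hy
        have hy' := hgspan y hy
        have hker : W ⊔ Submodule.span (ZMod 2) (Set.range g) ≤
            LinearMap.ker ((TrapAux.dotB n).flip x) := by
          refine sup_le (Submodule.span_le.mpr ?_) (Submodule.span_le.mpr ?_)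
          · rintro _ ⟨i, rfl⟩
            show (TrapAux.dotB n) (Ht i) x = 0
            exact hx (Sum.inl i)
          · rintro _ ⟨i, rfl⟩
            show (TrapAux.dotB n) (g i) x = 0
            have h := hx (Sum.inr (e (Sum.inl i)))
            simp only [Sum.elim_inr, Equiv.symm_apply_apply] at h
            exact h
        exact hker hy'
      rw [hCorth] at hxD
      exact hxD
    · intro hx i
      rcases i with i | i
      · exact hrows i x hx
      · simp only [Sum.elim_inr]
        exact (hmemD _).mp (hFD (e.symm i)) x hx
  · rintro u v h1u hua hvb ⟨S, hScard, hnc⟩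
    rw [TrapAux.ncard_sum] at hnc
    have hfirst : Set.ncard {i : Fin t |
        ∑ j ∈ S, Sum.elim Ht (fun i => F (e.symm i)) (Sum.inl i) j = 1} = oddRows Ht S := rfl
    rw [hfirst] at hnc
    -- the second summand is at least b - oddRows Ht S
    have hu : u ∈ Finset.Icc 1 a := Finset.mem_Icc.mpr ⟨h1u, hua⟩
    have hS : S ∈ Finset.powersetCard u (Finset.univ : Finset (Fin n)) :=
      Finset.mem_powersetCard_univ.mpr hScard
    let ψ : Fin (b - oddRows Ht S) → Fin (Module.finrank (ZMod 2) D - Module.finrank (ZMod 2) W + Fintype.card ι₂) :=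
      fun i => e (Sum.inr ⟨⟨u, hu⟩, ⟨S, hS⟩, i⟩)
    have hψinj : Function.Injective ψ := by
      intro i j h
      have h' := e.injective h
      have h'' := Sum.inr_injective h'
      have h3 := eq_of_heq (Sigma.mk.inj_iff.mp h'').2
      exact eq_of_heq (Sigma.mk.inj_iff.mp h3).2
    have hψmem : ∀ i, ψ i ∈ {i : Fin (Module.finrank (ZMod 2) D - Module.finrank (ZMod 2) W + Fintype.card ι₂) |
        ∑ j ∈ S, Sum.elim Ht (fun i => F (e.symm i)) (Sum.inr i) j = 1} := by
      intro i
      show ∑ j ∈ S, Sum.elim Ht (fun i => F (e.symm i)) (Sum.inr (ψ i)) j = 1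
      simp only [Sum.elim_inr, ψ, Equiv.symm_apply_apply]
      exact hfun1 _ _ _
    have hle : b - oddRows Ht S ≤ Set.ncard {i : Fin (Module.finrank (ZMod 2) D - Module.finrank (ZMod 2) W + Fintype.card ι₂) |
        ∑ j ∈ S, Sum.elim Ht (fun i => F (e.symm i)) (Sum.inr i) j = 1} := by
      have h1 : Set.range ψ ⊆ {i : Fin (Module.finrank (ZMod 2) D - Module.finrank (ZMod 2) W + Fintype.card ι₂) |
          ∑ j ∈ S, Sum.elim Ht (fun i => F (e.symm i)) (Sum.inr i) j = 1} := by
        rintro _ ⟨i, rfl⟩; exact hψmem i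
      have h2 := Set.ncard_le_ncard h1 (Set.toFinite _)
      have h3 : (Set.range ψ).ncard = b - oddRows Ht S := by
        rw [← Set.image_univ, Set.ncard_image_of_injective _ hψinj, Set.ncard_univ,
          Nat.card_eq_fintype_card, Fintype.card_fin]
      omega
    omega
end
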